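/- Let c ≥ 0 and let ν be a (nonnegative Borel) measure on (0,1] with ∫_{(0,1]} y² ν(dy) < ∞. For f : ℝ → ℝ twice continuously differentiable on a neighborhood of [0,1], define the Generalized Fleming–Viot generator Gf(x) = (c/2) x(1-x) f''(x) + ∫_{(0,1]} [ x (f(x+y(1-x)) - f(x)) + (1-x)(f(x(1-y)) - f(x)) ] ν(dy) for x ∈ [0,1], define G⁰f(x) = c(1-2x) f'(x) + ∫_{(0,1]} y(1-y) [ f(x+y(1-x)) - 2 f(x) + f(x(1-y)) ] ν(dy), and define G¹f(x) = (c/2) x(1-x) f''(x) + ∫_{(0,1]} (1-y)² [ x (f(x+y(1-x)) - f(x)) + (1-x)(f(x(1-y)) - f(x)) ] ν(dy). Set H(x) = x(1-x) and r₂ = c + ∫_{(0,1]} y² ν(dy). Then all these integrals are finite and for every x ∈ (0,1), G(H·f)(x)/H(x) + r₂ f(x) = G⁰f(x) + G¹f(x). -/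

import Mathlib

open MeasureTheory Set

/-- The Generalized Fleming–Viot generator (two types, no mutation):
`Gg(x) = (c/2)x(1-x)g''(x) + ∫ [x(g(x+y(1-x))-g(x)) + (1-x)(g(x(1-y))-g(x))] ν(dy)`. -/
noncomputable def GFVgen (c : ℝ) (ν : Measure ℝ) (g : ℝ → ℝ) (x : ℝ) : ℝ :=
  c / 2 * (x * (1 - x)) * deriv (deriv g) x
    + ∫ y in Ioc (0 : ℝ) 1,
        (x * (g (x + y * (1 - x)) - g x) + (1 - x) * (g (x * (1 - y)) - g x)) ∂ν

/-- The immigration part `G⁰`. -/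
noncomputable def GFV_G0 (c : ℝ) (ν : Measure ℝ) (f : ℝ → ℝ) (x : ℝ) : ℝ :=
  c * (1 - 2 * x) * deriv f x
    + ∫ y in Ioc (0 : ℝ) 1,
        y * (1 - y) * (f (x + y * (1 - x)) - 2 * f x + f (x * (1 - y))) ∂ν

/-- The reduced-reproduction part `G¹`. -/
noncomputable def GFV_G1 (c : ℝ) (ν : Measure ℝ) (f : ℝ → ℝ) (x : ℝ) : ℝ :=
  c / 2 * (x * (1 - x)) * deriv (deriv f) x
    + ∫ y in Ioc (0 : ℝ) 1,
        (1 - y) ^ 2 *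
          (x * (f (x + y * (1 - x)) - f x) + (1 - x) * (f (x * (1 - y)) - f x)) ∂ν


lemma uIcc_abs_le' {x a t : ℝ} (ht : t ∈ uIcc x a) : |t - x| ≤ |a - x| := by
  rw [Set.mem_uIcc] at ht
  rcases ht with ⟨h1, h2⟩ | ⟨h1, h2⟩ <;> rw [abs_le] <;> constructor <;>
    nlinarith [le_abs_self (a - x), neg_abs_le (a - x)]

lemma mem_a' {x y : ℝ} (hx : x ∈ Icc (0:ℝ) 1) (hy : y ∈ Icc (0:ℝ) 1) :
    x + y * (1 - x) ∈ Icc (0:ℝ) 1 := by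
  obtain ⟨a1, a2⟩ := hx; obtain ⟨b1, b2⟩ := hy
  exact ⟨by nlinarith, by nlinarith⟩

lemma mem_b' {x y : ℝ} (hx : x ∈ Icc (0:ℝ) 1) (hy : y ∈ Icc (0:ℝ) 1) :
    x * (1 - y) ∈ Icc (0:ℝ) 1 := by
  obtain ⟨a1, a2⟩ := hx; obtain ⟨b1, b2⟩ := hy
  exact ⟨by nlinarith, by nlinarith⟩

lemma lip_bound' {f : ℝ → ℝ} {U : Set ℝ} (hU : IsOpen U) (hUI : Icc (0:ℝ) 1 ⊆ U)
    (hf : ContDiffOn ℝ 1 f U) :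
    ∃ L : ℝ, 0 ≤ L ∧ ∀ a ∈ Icc (0:ℝ) 1, ∀ b ∈ Icc (0:ℝ) 1, |f a - f b| ≤ L * |a - b| := by
  obtain ⟨K, hK⟩ := isCompact_Icc.exists_bound_of_continuousOn
    ((hf.continuousOn_deriv_of_isOpen hU le_rfl).mono hUI)
  refine ⟨max K 0, le_max_right _ _, fun a ha b hb => ?_⟩
  have := Convex.norm_image_sub_le_of_norm_deriv_le (C := max K 0)
    (fun t ht => (hf.differentiableOn one_ne_zero t (hUI ht)).differentiableAt (hU.mem_nhds (hUI ht)))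
    (fun t ht => (hK t ht).trans (le_max_left _ _)) (convex_Icc 0 1) hb ha
  simpa [Real.norm_eq_abs] using this

lemma key_bound' {g : ℝ → ℝ} {U : Set ℝ} (hU : IsOpen U) (hUI : Icc (0:ℝ) 1 ⊆ U)
    (hg : ContDiffOn ℝ 2 g U) {x : ℝ} (hx : x ∈ Icc (0:ℝ) 1) :
    ∃ C : ℝ, 0 ≤ C ∧ ∀ y ∈ Ioc (0:ℝ) 1,
      |x * (g (x + y * (1 - x)) - g x) + (1 - x) * (g (x * (1 - y)) - g x)| ≤ C * y ^ 2 := by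
  have hg1 : ContDiffOn ℝ 1 (deriv g) U := hg.deriv_of_isOpen hU (by norm_num)
  obtain ⟨K, hK⟩ := isCompact_Icc.exists_bound_of_continuousOn
    ((hg1.continuousOn_deriv_of_isOpen hU le_rfl).mono hUI)
  have hK'0 : (0:ℝ) ≤ max K 0 := le_max_right _ _
  set K' := max K 0 with hK'def
  have hlip : ∀ s ∈ Icc (0:ℝ) 1, ∀ t ∈ Icc (0:ℝ) 1,
      |deriv g s - deriv g t| ≤ K' * |s - t| := by
    intro s hs t ht
    have := Convex.norm_image_sub_le_of_norm_deriv_le (C := K')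
      (fun u hu => (hg1.differentiableOn one_ne_zero u (hUI hu)).differentiableAt
        (hU.mem_nhds (hUI hu)))
      (fun u hu => (hK u hu).trans (le_max_left _ _)) (convex_Icc 0 1) ht hs
    simpa [Real.norm_eq_abs] using this
  have hdiffg : ∀ t ∈ Icc (0:ℝ) 1, HasDerivAt g (deriv g t) t := fun t ht =>
    ((hg.differentiableOn (by norm_num) t (hUI ht)).differentiableAt
      (hU.mem_nhds (hUI ht))).hasDerivAt
  have htaylor : ∀ a ∈ Icc (0:ℝ) 1,
      |g a - g x - deriv g x * (a - x)| ≤ K' * |a - x| * |a - x| := by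
    intro a ha
    have hsub : uIcc x a ⊆ Icc (0:ℝ) 1 := uIcc_subset_Icc hx ha
    have key := Convex.norm_image_sub_le_of_norm_hasDerivWithin_le
      (f := fun t => g t - g x - deriv g x * (t - x))
      (f' := fun t => deriv g t - deriv g x)
      (s := uIcc x a) (C := K' * |a - x|)
      (fun t ht => by
        have h1 : HasDerivAt (fun t => g t - g x - deriv g x * (t - x))
            (deriv g t - deriv g x) t := by
          have := ((hdiffg t (hsub ht)).sub_const (g x)).sub
            (((hasDerivAt_id t).sub_const x).const_mul (deriv g x))
          exact this.congr_deriv (by ring)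
        exact h1.hasDerivWithinAt)
      (fun t ht => by
        have h1 := hlip t (hsub ht) x hx
        have h2 := uIcc_abs_le' ht
        have : |deriv g t - deriv g x| ≤ K' * |a - x| := by nlinarith
        simpa [Real.norm_eq_abs] using this)
      (convex_uIcc x a) left_mem_uIcc right_mem_uIcc
    simpa [Real.norm_eq_abs] using key
  refine ⟨K', hK'0, fun y hy => ?_⟩
  obtain ⟨hy0, hy1⟩ := hy
  obtain ⟨hx0, hx1⟩ := hx
  have ha : x + y * (1 - x) ∈ Icc (0:ℝ) 1 := mem_a' ⟨hx0, hx1⟩ ⟨hy0.le, hy1⟩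
  have hb : x * (1 - y) ∈ Icc (0:ℝ) 1 := mem_b' ⟨hx0, hx1⟩ ⟨hy0.le, hy1⟩
  have hA := htaylor _ ha
  have hB := htaylor _ hb
  rw [show x + y * (1 - x) - x = y * (1 - x) by ring] at hA
  rw [show x * (1 - y) - x = -(x * y) by ring] at hB
  rw [abs_of_nonneg (by nlinarith : (0:ℝ) ≤ y * (1 - x))] at hA
  rw [abs_neg, abs_of_nonneg (by nlinarith : (0:ℝ) ≤ x * y)] at hB
  set A1 := g (x + y * (1 - x)) - g x - deriv g x * (y * (1 - x)) with hA1
  set A2 := g (x * (1 - y)) - g x - deriv g x * -(x * y) with hA2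
  have hsplit : x * (g (x + y * (1 - x)) - g x) + (1 - x) * (g (x * (1 - y)) - g x)
      = x * A1 + (1 - x) * A2 := by rw [hA1, hA2]; ring
  rw [hsplit]
  have step1 : |x * A1 + (1 - x) * A2| ≤ x * |A1| + (1 - x) * |A2| := by
    refine (abs_add_le _ _).trans ?_
    rw [abs_mul, abs_mul, abs_of_nonneg hx0, abs_of_nonneg (by linarith : (0:ℝ) ≤ 1 - x)]
  have step2 : x * |A1| + (1 - x) * |A2|
      ≤ x * (K' * (y * (1 - x)) * (y * (1 - x))) + (1 - x) * (K' * (x * y) * (x * y)) :=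
    add_le_add (mul_le_mul_of_nonneg_left hA hx0)
      (mul_le_mul_of_nonneg_left hB (by linarith))
  refine step1.trans (step2.trans ?_)
  nlinarith [mul_nonneg (mul_nonneg hK'0 (sq_nonneg y)) (sq_nonneg (2*x - 1)),
    mul_nonneg hK'0 (sq_nonneg y)]

/-- Decomposition of the generator of the Generalized Fleming–Viot process conditioned on
coexistence of both types: with `H(x) = x(1-x)` and `r₂ = c + ∫ y² ν(dy)`, one has
`G(H·f)(x)/H(x) + r₂ f(x) = G⁰f(x) + G¹f(x)` on `(0,1)`, all integrals being finite. -/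
theorem gfv_coexistence_generator_decomposition
    (c : ℝ) (hc : 0 ≤ c) (ν : Measure ℝ)
    (hν : IntegrableOn (fun y => y ^ 2) (Ioc (0 : ℝ) 1) ν)
    (f : ℝ → ℝ) (U : Set ℝ) (hU : IsOpen U) (hUI : Icc (0 : ℝ) 1 ⊆ U)
    (hf : ContDiffOn ℝ 2 f U) :
    ∀ x ∈ Ioo (0 : ℝ) 1,
      IntegrableOn
        (fun y =>
          x * ((fun z => z * (1 - z) * f z) (x + y * (1 - x)) - (fun z => z * (1 - z) * f z) x)
            + (1 - x) * ((fun z => z * (1 - z) * f z) (x * (1 - y))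
                - (fun z => z * (1 - z) * f z) x))
        (Ioc (0 : ℝ) 1) ν ∧
      IntegrableOn
        (fun y => y * (1 - y) * (f (x + y * (1 - x)) - 2 * f x + f (x * (1 - y))))
        (Ioc (0 : ℝ) 1) ν ∧
      IntegrableOn
        (fun y => (1 - y) ^ 2 *
          (x * (f (x + y * (1 - x)) - f x) + (1 - x) * (f (x * (1 - y)) - f x)))
        (Ioc (0 : ℝ) 1) ν ∧
      GFVgen c ν (fun z => z * (1 - z) * f z) x / (x * (1 - x))
          + (c + ∫ y in Ioc (0 : ℝ) 1, y ^ 2 ∂ν) * f x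
        = GFV_G0 c ν f x + GFV_G1 c ν f x := by
  intro x hx
  obtain ⟨hx0, hx1⟩ := hx
  have hxI : x ∈ Icc (0:ℝ) 1 := ⟨hx0.le, hx1.le⟩
  have hg : ContDiffOn ℝ 2 (fun z => z * (1 - z) * f z) U :=
    ((contDiff_id.mul (contDiff_const.sub contDiff_id)).contDiffOn).mul hf
  set g : ℝ → ℝ := fun z => z * (1 - z) * f z with hgdef
  -- continuity on Ioc 0 1
  have hmapa : MapsTo (fun y : ℝ => x + y * (1 - x)) (Ioc (0:ℝ) 1) U :=
    fun y hy => hUI (mem_a' hxI (Ioc_subset_Icc_self hy))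
  have hmapb : MapsTo (fun y : ℝ => x * (1 - y)) (Ioc (0:ℝ) 1) U :=
    fun y hy => hUI (mem_b' hxI (Ioc_subset_Icc_self hy))
  have hconta : ContinuousOn (fun y => f (x + y * (1 - x))) (Ioc (0:ℝ) 1) :=
    hf.continuousOn.comp (Continuous.continuousOn (by continuity)) hmapa
  have hcontb : ContinuousOn (fun y => f (x * (1 - y))) (Ioc (0:ℝ) 1) :=
    hf.continuousOn.comp (Continuous.continuousOn (by continuity)) hmapb
  have hgconta : ContinuousOn (fun y => g (x + y * (1 - x))) (Ioc (0:ℝ) 1) :=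
    hg.continuousOn.comp (Continuous.continuousOn (by continuity)) hmapa
  have hgcontb : ContinuousOn (fun y => g (x * (1 - y))) (Ioc (0:ℝ) 1) :=
    hg.continuousOn.comp (Continuous.continuousOn (by continuity)) hmapb
  -- integrability of the three integrands
  obtain ⟨CA, hCA0, hCA⟩ := key_bound' hU hUI hg hxI
  have hintA : IntegrableOn
      (fun y => x * (g (x + y * (1 - x)) - g x) + (1 - x) * (g (x * (1 - y)) - g x))
      (Ioc (0:ℝ) 1) ν := by
    refine Integrable.mono' (hν.const_mul CA) ?_ ?_
    · exact ((continuousOn_const.mul (hgconta.sub continuousOn_const)).add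
        (continuousOn_const.mul (hgcontb.sub continuousOn_const))).aestronglyMeasurable
        measurableSet_Ioc
    · refine (ae_restrict_iff' measurableSet_Ioc).2 (Filter.Eventually.of_forall fun y hy => ?_)
      simpa [Real.norm_eq_abs] using hCA y hy
  obtain ⟨L, hL0, hL⟩ := lip_bound' hU hUI (hf.of_le (by norm_num))
  have hintB0 : IntegrableOn
      (fun y => y * (1 - y) * (f (x + y * (1 - x)) - 2 * f x + f (x * (1 - y))))
      (Ioc (0:ℝ) 1) ν := by
    refine Integrable.mono' (hν.const_mul L) ?_ ?_
    · exact (((continuous_id.mul (continuous_const.sub continuous_id)).continuousOn).mul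
        ((hconta.sub continuousOn_const).add hcontb)).aestronglyMeasurable measurableSet_Ioc
    · refine (ae_restrict_iff' measurableSet_Ioc).2 (Filter.Eventually.of_forall fun y hy => ?_)
      obtain ⟨hy0, hy1⟩ := hy
      have hyI : y ∈ Icc (0:ℝ) 1 := ⟨hy0.le, hy1⟩
      have h1 := hL _ (mem_a' hxI hyI) x hxI
      have h2 := hL _ (mem_b' hxI hyI) x hxI
      rw [show x + y * (1 - x) - x = y * (1 - x) by ring,
        abs_of_nonneg (by nlinarith : (0:ℝ) ≤ y * (1 - x))] at h1
      rw [show x * (1 - y) - x = -(x * y) by ring, abs_neg,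
        abs_of_nonneg (by nlinarith : (0:ℝ) ≤ x * y)] at h2
      have hS : |f (x + y * (1 - x)) - 2 * f x + f (x * (1 - y))| ≤ L * y := by
        calc |f (x + y * (1 - x)) - 2 * f x + f (x * (1 - y))|
            = |(f (x + y * (1 - x)) - f x) + (f (x * (1 - y)) - f x)| := by ring_nf
          _ ≤ |f (x + y * (1 - x)) - f x| + |f (x * (1 - y)) - f x| := abs_add_le _ _
          _ ≤ L * (y * (1 - x)) + L * (x * y) := add_le_add h1 h2
          _ = L * y := by ring
      rw [Real.norm_eq_abs, abs_mul, abs_mul, abs_of_nonneg hy0.le,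
        abs_of_nonneg (by linarith : (0:ℝ) ≤ 1 - y)]
      have hmono := mul_le_mul_of_nonneg_left hS
        (mul_nonneg hy0.le (by linarith : (0:ℝ) ≤ 1 - y))
      nlinarith [mul_nonneg (mul_nonneg hL0 (sq_nonneg y)) hy0.le]
  obtain ⟨CB, hCB0, hCB⟩ := key_bound' hU hUI hf hxI
  have hintB1 : IntegrableOn
      (fun y => (1 - y) ^ 2 *
        (x * (f (x + y * (1 - x)) - f x) + (1 - x) * (f (x * (1 - y)) - f x)))
      (Ioc (0:ℝ) 1) ν := by
    refine Integrable.mono' (hν.const_mul CB) ?_ ?_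
    · exact ((((continuous_const.sub continuous_id).pow 2).continuousOn).mul
        ((continuousOn_const.mul (hconta.sub continuousOn_const)).add
          (continuousOn_const.mul (hcontb.sub continuousOn_const)))).aestronglyMeasurable
        measurableSet_Ioc
    · refine (ae_restrict_iff' measurableSet_Ioc).2 (Filter.Eventually.of_forall fun y hy => ?_)
      obtain ⟨hy0, hy1⟩ := hy
      have h1 := hCB y ⟨hy0, hy1⟩
      rw [Real.norm_eq_abs, abs_mul, abs_of_nonneg (sq_nonneg (1 - y))]
      have h2 : (1 - y) ^ 2 ≤ 1 := by nlinarith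
      calc (1 - y) ^ 2 * |x * (f (x + y * (1 - x)) - f x) + (1 - x) * (f (x * (1 - y)) - f x)|
          ≤ 1 * |x * (f (x + y * (1 - x)) - f x) + (1 - x) * (f (x * (1 - y)) - f x)| :=
            mul_le_mul_of_nonneg_right h2 (abs_nonneg _)
        _ ≤ CB * y ^ 2 := by rw [one_mul]; exact h1
  -- derivative computations
  have hUx : U ∈ nhds x := hU.mem_nhds (hUI hxI)
  have hf1 : ContDiffOn ℝ 1 (deriv f) U := hf.deriv_of_isOpen hU (by norm_num)
  have hfd : ∀ z ∈ U, HasDerivAt f (deriv f z) z := fun z hz =>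
    ((hf.differentiableOn (by norm_num) z hz).differentiableAt (hU.mem_nhds hz)).hasDerivAt
  have hfd' : HasDerivAt (deriv f) (deriv (deriv f) x) x :=
    ((hf1.differentiableOn one_ne_zero x (hUI hxI)).differentiableAt hUx).hasDerivAt
  have hmulder : ∀ z : ℝ, HasDerivAt (fun w : ℝ => w * (1 - w)) (1 - 2 * z) z := by
    intro z
    have h := (hasDerivAt_id z).mul ((hasDerivAt_const z (1:ℝ)).sub (hasDerivAt_id z))
    refine h.congr_deriv ?_
    simp; ring
  have hgderiv : ∀ z ∈ U, deriv g z = (1 - 2 * z) * f z + z * (1 - z) * deriv f z := by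
    intro z hz
    exact ((hmulder z).mul (hfd z hz)).deriv
  have hgd2 : deriv (deriv g) x
      = -2 * f x + 2 * (1 - 2 * x) * deriv f x + x * (1 - x) * deriv (deriv f) x := by
    have hev : deriv g =ᶠ[nhds x] fun z => (1 - 2 * z) * f z + z * (1 - z) * deriv f z :=
      Filter.eventuallyEq_of_mem hUx hgderiv
    rw [hev.deriv_eq]
    have h1 : HasDerivAt (fun z : ℝ => 1 - 2 * z) (-2 : ℝ) x := by
      have h := (hasDerivAt_const x (1:ℝ)).sub ((hasDerivAt_id x).const_mul (2:ℝ))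
      refine h.congr_deriv ?_
      simp
    have h2 := (h1.mul (hfd x (hUI hxI))).add ((hmulder x).mul hfd')
    rw [HasDerivAt.deriv (f := fun z => (1 - 2 * z) * f z + z * (1 - z) * deriv f z) h2]; ring
  -- integral identity
  have hptA : EqOn
      (fun y => x * (g (x + y * (1 - x)) - g x) + (1 - x) * (g (x * (1 - y)) - g x))
      (fun y => x * (1 - x) *
        (y * (1 - y) * (f (x + y * (1 - x)) - 2 * f x + f (x * (1 - y)))
          + (1 - y) ^ 2 * (x * (f (x + y * (1 - x)) - f x) + (1 - x) * (f (x * (1 - y)) - f x))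
          - f x * y ^ 2)) (Ioc (0:ℝ) 1) := by
    intro y _
    simp only [hgdef]
    ring
  have hIA : (∫ y in Ioc (0:ℝ) 1,
        (x * (g (x + y * (1 - x)) - g x) + (1 - x) * (g (x * (1 - y)) - g x)) ∂ν)
      = x * (1 - x) *
        ((∫ y in Ioc (0:ℝ) 1,
            y * (1 - y) * (f (x + y * (1 - x)) - 2 * f x + f (x * (1 - y))) ∂ν)
          + (∫ y in Ioc (0:ℝ) 1, (1 - y) ^ 2 *
              (x * (f (x + y * (1 - x)) - f x) + (1 - x) * (f (x * (1 - y)) - f x)) ∂ν)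
          - f x * ∫ y in Ioc (0:ℝ) 1, y ^ 2 ∂ν) := by
    have hadd : IntegrableOn
        (fun y => y * (1 - y) * (f (x + y * (1 - x)) - 2 * f x + f (x * (1 - y)))
          + (1 - y) ^ 2 *
            (x * (f (x + y * (1 - x)) - f x) + (1 - x) * (f (x * (1 - y)) - f x)))
        (Ioc (0:ℝ) 1) ν := hintB0.add hintB1
    have hcm : IntegrableOn (fun y : ℝ => f x * y ^ 2) (Ioc (0:ℝ) 1) ν := hν.const_mul (f x)
    rw [setIntegral_congr_fun measurableSet_Ioc hptA, integral_const_mul,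
      integral_sub hadd hcm, integral_add hintB0 hintB1, integral_const_mul]
  refine ⟨hintA, hintB0, hintB1, ?_⟩
  have hne : x * (1 - x) ≠ 0 := ne_of_gt (mul_pos hx0 (by linarith))
  simp only [GFVgen, GFV_G0, GFV_G1]
  rw [hIA, hgd2]
  field_simp
  ring
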